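/- Let g : (0, ∞) → (0, ∞) be nondecreasing and satisfy (∏_{j=1}^d g(s_j))^{1/d} ≤ g((s_1 ⋯ s_d)^{1/d}) for all 0 < s_1 ≤ … ≤ s_d. Define f(s) = exp(−1/g(s)). Then f also satisfies (∏_{j=1}^d f(s_j))^{1/d} ≤ f((s_1 ⋯ s_d)^{1/d}) for all 0 < s_1 ≤ … ≤ s_d. -/

import Mathlib

/-- if `g : (0,∞) → (0,∞)` is nondecreasing and satisfies
`(∏ g(s_j))^{1/d} ≤ g((s_1⋯s_d)^{1/d})` for all `0 < s_1 ≤ … ≤ s_d`, then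
`f(s) = exp(-1/g(s))` satisfies the same geometric-mean condition. -/
theorem stmt9 (d : ℕ) (hd : 1 ≤ d) (g : ℝ → ℝ)
    (hgpos : ∀ s : ℝ, 0 < s → 0 < g s)
    (hgmono : MonotoneOn g (Set.Ioi (0 : ℝ)))
    (hg : ∀ s : Fin d → ℝ, (∀ j, 0 < s j) → Monotone s →
      (∏ j, g (s j)) ^ (1 / (d : ℝ)) ≤ g ((∏ j, s j) ^ (1 / (d : ℝ)))) :
    ∀ s : Fin d → ℝ, (∀ j, 0 < s j) → Monotone s →
      (∏ j, Real.exp (-1 / g (s j))) ^ (1 / (d : ℝ))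
        ≤ Real.exp (-1 / g ((∏ j, s j) ^ (1 / (d : ℝ)))) := by
  intro s hs hmono
  have hdpos : (0:ℝ) < d := by exact_mod_cast Nat.lt_of_lt_of_le Nat.zero_lt_one hd
  set G := g ((∏ j, s j) ^ (1 / (d : ℝ))) with hG
  have hGpos : 0 < G := by
    apply hgpos
    exact Real.rpow_pos_of_pos (Finset.prod_pos fun j _ => hs j) _
  have hprodg : 0 < ∏ j, g (s j) := Finset.prod_pos fun j _ => hgpos _ (hs j)
  have key : ((∏ j, g (s j)) ^ (1 / (d : ℝ)))⁻¹ ≤ ∑ j, (1 / (d : ℝ)) * (g (s j))⁻¹ := by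
    have h := Real.geom_mean_le_arith_mean_weighted Finset.univ (fun _ => 1 / (d : ℝ))
      (fun j => (g (s j))⁻¹) (fun _ _ => by positivity)
      (by simp [Finset.sum_const, mul_one_div]; field_simp)
      (fun j _ => (inv_nonneg.mpr (hgpos _ (hs j)).le))
    calc ((∏ j, g (s j)) ^ (1 / (d : ℝ)))⁻¹
        = ((∏ j, g (s j))⁻¹) ^ (1 / (d : ℝ)) := (Real.inv_rpow hprodg.le _).symm
      _ = (∏ j, (g (s j))⁻¹) ^ (1 / (d : ℝ)) := by rw [Finset.prod_inv_distrib]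
      _ = ∏ j, ((g (s j))⁻¹) ^ (1 / (d : ℝ)) :=
          (Real.finset_prod_rpow _ _ (fun j _ => (inv_nonneg.mpr (hgpos _ (hs j)).le)) _).symm
      _ ≤ _ := h
  have hGinv : G⁻¹ ≤ ((∏ j, g (s j)) ^ (1 / (d : ℝ)))⁻¹ :=
    inv_anti₀ (by positivity) (hg s hs hmono)
  have hsum : (∑ j, -1 / g (s j)) * (1 / (d : ℝ)) ≤ -1 / G := by
    have h2 : G⁻¹ ≤ ∑ j, (1 / (d : ℝ)) * (g (s j))⁻¹ := hGinv.trans key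
    have heq : (∑ j, -1 / g (s j)) * (1 / (d : ℝ)) = -∑ j, (1 / (d : ℝ)) * (g (s j))⁻¹ := by
      rw [Finset.sum_mul, ← Finset.sum_neg_distrib]
      congr 1; ext j; field_simp
    rw [heq, neg_div]
    rw [← one_div] at h2
    exact neg_le_neg h2
  calc (∏ j, Real.exp (-1 / g (s j))) ^ (1 / (d : ℝ))
      = Real.exp ((∑ j, -1 / g (s j)) * (1 / (d : ℝ))) := by
        rw [← Real.exp_sum, ← Real.exp_mul]
    _ ≤ Real.exp (-1 / G) := Real.exp_le_exp.mpr hsum
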